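/- With P, D, F̄, the power series roots φ_1, …, φ_D, and α_i := φ_i(0, 0) as in the setup, let k > deg_T P and for S ⊆ {1, …, D} let Q_S(T, x, z) := (∏_{i∈S} (z − φ_i(T, x))) trunc T^k. Then the set of monic-in-z polynomials in F[T, x, z] that divide P (equivalently, the set of monic-in-z factors of P over the base field F) is equal to the set { Q_U ∈ F̄[T, x, z] : U ⊆ {1, …, D}, Q_U divides P in F̄[T, x, z], and Q_U(0, x, z) = Q_U(0, 0, z) ∈ F[z] }. -/

import Mathlib

/-!
Lemma `identifying-conjugates-to-divisibility-testing-II`: the monic-in-`z`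
factors of `P` over the base field `F` are exactly the subproducts `Q_U` that
divide `P` over `F̄` and whose `T = 0` projection has coefficients in `F`.

`P ∈ F[T, x, z]` is represented as `Polynomial (Polynomial (MvPolynomial (Fin n) F))`,
with `z` the outer variable and `T` the inner one.  `F̄[x][[T]][z]` is
`Polynomial (PowerSeries (MvPolynomial (Fin n) (AlgebraicClosure F)))`.
-/

noncomputable section

/-- `F̄[x]`. -/
abbrev MvK (F : Type*) [Field F] (n : ℕ) := MvPolynomial (Fin n) (AlgebraicClosure F)

/-- Coefficient extension `F[T, x, z] → F̄[T, x, z]`. -/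
def liftTXZ (F : Type*) [Field F] (n : ℕ) :
    Polynomial (Polynomial (MvPolynomial (Fin n) F)) →+* Polynomial (Polynomial (MvK F n)) :=
  Polynomial.mapRingHom (Polynomial.mapRingHom
    (MvPolynomial.map (algebraMap F (AlgebraicClosure F))))

/-- Inclusion `F̄[T, x, z] = F̄[x][T][z] → F̄[x][[T]][z]`. -/
def liftPS (F : Type*) [Field F] (n : ℕ) :
    Polynomial (Polynomial (MvK F n)) →+* Polynomial (PowerSeries (MvK F n)) :=
  Polynomial.mapRingHom (Polynomial.coeToPowerSeries.ringHom)

/-- Coefficientwise truncation `trunc T^k : F̄[x][[T]][z] → F̄[x][T][z]`. -/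
def truncPow {A : Type*} [CommSemiring A] (k : ℕ) (q : Polynomial (PowerSeries A)) :
    Polynomial (Polynomial A) :=
  ∑ j ∈ q.support, Polynomial.monomial j (PowerSeries.trunc k (q.coeff j))

open Polynomial

/-! ### Auxiliary lemmas -/

section Aux

/-- swap the two variables of a bivariate polynomial ring -/
def psi (A : Type*) [CommSemiring A] : Polynomial (Polynomial A) →+* Polynomial (Polynomial A) :=
  Polynomial.eval₂RingHom (Polynomial.mapRingHom Polynomial.C) (Polynomial.C Polynomial.X)

lemma pp_ringHom_ext {A S : Type*} [CommSemiring A] [Semiring S]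
    {f g : Polynomial (Polynomial A) →+* S}
    (h1 : ∀ a : A, f (C (C a)) = g (C (C a))) (h2 : f (C X) = g (C X)) (h3 : f X = g X) :
    f = g := by
  apply Polynomial.ringHom_ext ?_ h3
  intro p
  have : f.comp (C : Polynomial A →+* Polynomial (Polynomial A)) =
      g.comp (C : Polynomial A →+* Polynomial (Polynomial A)) :=
    Polynomial.ringHom_ext h1 h2
  exact RingHom.congr_fun this p

@[simp] lemma psi_CC {A : Type*} [CommSemiring A] (a : A) :
    psi A (C (C a)) = C (C a) := by
  simp [psi, eval₂_C]

@[simp] lemma psi_CX {A : Type*} [CommSemiring A] : psi A (C X) = X := by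
  simp [psi, eval₂_C]

@[simp] lemma psi_X {A : Type*} [CommSemiring A] : psi A X = C X := by
  simp [psi]

lemma psi_comp_psi (A : Type*) [CommSemiring A] :
    (psi A).comp (psi A) = RingHom.id _ := by
  apply pp_ringHom_ext <;> simp

@[simp] lemma psi_psi {A : Type*} [CommSemiring A] (Q : Polynomial (Polynomial A)) :
    psi A (psi A Q) = Q := RingHom.congr_fun (psi_comp_psi A) Q

lemma psi_injective (A : Type*) [CommSemiring A] : Function.Injective (psi A) :=
  Function.LeftInverse.injective psi_psi

lemma psi_coeff_coeff {A : Type*} [CommSemiring A] (Q : Polynomial (Polynomial A)) (m j : ℕ) :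
    ((psi A Q).coeff m).coeff j = (Q.coeff j).coeff m := by
  induction Q using Polynomial.induction_on' with
  | add p q hp hq => simp [map_add, hp, hq]
  | monomial j' p =>
      have h1 : psi A (monomial j' p) = p.map C * C (X ^ j') := by
        rw [← C_mul_X_pow_eq_monomial, map_mul, map_pow]
        simp [psi, eval₂_C]
      rw [h1]
      rw [coeff_mul_C, coeff_map, coeff_monomial]
      by_cases h : j' = j
      · subst h; simp [coeff_mul_C, coeff_X_pow]
      · simp [coeff_X_pow, h, Ne.symm h]

lemma psi_coeff_zero {A : Type*} [CommSemiring A] (Q : Polynomial (Polynomial A)) :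
    (psi A Q).coeff 0 = Q.map (evalRingHom (0 : A)) := by
  refine Polynomial.ext fun j => ?_
  rw [psi_coeff_coeff, coeff_map, coe_evalRingHom, ← coeff_zero_eq_eval_zero]

lemma psi_map_comm {A B : Type*} [CommSemiring A] [CommSemiring B] (f : A →+* B)
    (Q : Polynomial (Polynomial A)) :
    psi B (Q.map (mapRingHom f)) = (psi A Q).map (mapRingHom f) := by
  refine Polynomial.ext fun m => Polynomial.ext fun j => ?_
  simp only [psi_coeff_coeff, coeff_map, coe_mapRingHom]

lemma map_eval0_map {A B : Type*} [CommSemiring A] [CommSemiring B] (f : A →+* B)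
    (Q : Polynomial (Polynomial A)) :
    (Q.map (mapRingHom f)).map (evalRingHom (0 : B)) =
      (Q.map (evalRingHom (0 : A))).map f := by
  refine Polynomial.ext fun j => ?_
  simp only [coeff_map, coe_evalRingHom, coe_mapRingHom, ← coeff_zero_eq_eval_zero]

lemma coeff_degree_lt_of_dvd {A : Type*} [CommRing A] [IsDomain A]
    {G P : Polynomial (Polynomial A)} (hdvd : G ∣ P) (hP : P ≠ 0) {k : ℕ}
    (hk : ∀ i, (P.coeff i).degree < (k : WithBot ℕ)) :
    ∀ i, (G.coeff i).degree < (k : WithBot ℕ) := by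
  have hpsidvd : psi A G ∣ psi A P := _root_.map_dvd _ hdvd
  have hpsiP : psi A P ≠ 0 := fun h => hP (by
    have := congrArg (psi A) h
    rwa [psi_psi, map_zero] at this)
  have hPdeg : (psi A P).degree < (k : WithBot ℕ) := by
    rw [degree_lt_iff_coeff_zero]
    intro m hm
    refine Polynomial.ext fun j => ?_
    rw [psi_coeff_coeff, coeff_zero]
    exact coeff_eq_zero_of_degree_lt (lt_of_lt_of_le (hk j) (by exact_mod_cast hm))
  have hGdeg : (psi A G).degree < (k : WithBot ℕ) :=
    lt_of_le_of_lt (degree_le_of_dvd hpsidvd hpsiP) hPdeg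
  intro i
  rw [degree_lt_iff_coeff_zero]
  intro m hm
  have : (psi A G).coeff m = 0 := coeff_eq_zero_of_degree_lt (lt_of_lt_of_le hGdeg
    (by exact_mod_cast hm))
  have h2 := psi_coeff_coeff (A := A) G m i
  rw [this, coeff_zero] at h2
  exact h2.symm

lemma psi_coeff_degree_lt_of_monic {A : Type*} [CommSemiring A]
    {G : Polynomial (Polynomial A)} (hG : G.Monic) :
    ∀ m, 0 < m → ((psi A G).coeff m).degree < (G.natDegree : WithBot ℕ) := by
  intro m hm
  rw [degree_lt_iff_coeff_zero]
  intro N hN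
  rw [psi_coeff_coeff]
  rcases eq_or_lt_of_le hN with rfl | hNlt
  · rw [hG.coeff_natDegree]
    exact coeff_one.trans (by simp [hm.ne'])
  · rw [coeff_eq_zero_of_natDegree_lt hNlt, coeff_zero]

lemma monic_dvd_one' {R : Type*} [CommRing R] {g : R[X]} (hg : g.Monic) (h : g ∣ 1) : g = 1 :=
  hg.eq_one_of_isUnit (isUnit_of_dvd_one h)

lemma monic_dvd_multiset_prod_X_sub_C {R : Type*} [CommRing R] [IsDomain R]
    (s : Multiset R) : ∀ g : R[X], g.Monic → g ∣ (s.map fun a => X - C a).prod →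
    ∃ t ≤ s, g = (t.map fun a => X - C a).prod := by
  induction s using Multiset.induction_on with
  | empty =>
      intro g hg h
      exact ⟨0, le_refl _, by simpa using monic_dvd_one' hg (by simpa using h)⟩
  | cons a s ih =>
      intro g hg h
      rw [Multiset.map_cons, Multiset.prod_cons] at h
      obtain ⟨w, hw⟩ := h
      have hpm : (X - C a).Monic := monic_X_sub_C a
      have hpne : (X - C a) ≠ 0 := hpm.ne_zero
      have hp : Prime (X - C a) := prime_X_sub_C a
      have hdvd : (X - C a) ∣ g * w := ⟨(s.map fun a => X - C a).prod, hw.symm⟩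
      rcases hp.dvd_mul.mp hdvd with h1 | h2
      · obtain ⟨g', hg'⟩ := h1
        have hgm' : g'.Monic := hpm.of_mul_monic_left (hg' ▸ hg)
        have hM : (s.map fun a => X - C a).prod = g' * w := by
          apply mul_left_cancel₀ hpne
          rw [hw, hg']; ring
        obtain ⟨t, ht, hgt⟩ := ih g' hgm' ⟨w, hM⟩
        refine ⟨a ::ₘ t, Multiset.cons_le_cons a ht, ?_⟩
        rw [Multiset.map_cons, Multiset.prod_cons, ← hgt, hg']
      · obtain ⟨w', hw'⟩ := h2
        have hM : (s.map fun a => X - C a).prod = g * w' := by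
          apply mul_left_cancel₀ hpne
          rw [hw, hw']; ring
        obtain ⟨t, ht, hgt⟩ := ih g hg ⟨w', hM⟩
        exact ⟨t, le_trans ht (Multiset.le_cons_self s a), hgt⟩

lemma monic_dvd_finset_prod_X_sub_C {R : Type*} [CommRing R] [IsDomain R]
    {ι : Type*} (s : Finset ι) (f : ι → R) : ∀ g : R[X], g.Monic →
    g ∣ (∏ i ∈ s, (X - C (f i))) →
    ∃ u ⊆ s, g = ∏ i ∈ u, (X - C (f i)) := by
  classical
  induction s using Finset.induction_on with
  | empty =>
      intro g hg h
      exact ⟨∅, Finset.Subset.refl _, by simpa using monic_dvd_one' hg (by simpa using h)⟩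
  | insert _ _ hna ih =>
      rename_i a s'
      intro g hg h
      rw [Finset.prod_insert hna] at h
      obtain ⟨w, hw⟩ := h
      have hpm : (X - C (f a)).Monic := monic_X_sub_C (f a)
      have hpne : (X - C (f a)) ≠ 0 := hpm.ne_zero
      have hp : Prime (X - C (f a)) := prime_X_sub_C (f a)
      have hdvd : (X - C (f a)) ∣ g * w := ⟨∏ i ∈ s', (X - C (f i)), hw.symm⟩
      rcases hp.dvd_mul.mp hdvd with h1 | h2
      · obtain ⟨g', hg'⟩ := h1
        have hgm' : g'.Monic := hpm.of_mul_monic_left (hg' ▸ hg)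
        have hM : (∏ i ∈ s', (X - C (f i))) = g' * w := by
          apply mul_left_cancel₀ hpne
          rw [hw, hg']; ring
        obtain ⟨u, hu, hgt⟩ := ih g' hgm' ⟨w, hM⟩
        refine ⟨insert a u, Finset.insert_subset_insert a hu, ?_⟩
        rw [Finset.prod_insert (fun hx => hna (hu hx)), ← hgt, hg']
      · obtain ⟨w', hw'⟩ := h2
        have hM : (∏ i ∈ s', (X - C (f i))) = g * w' := by
          apply mul_left_cancel₀ hpne
          rw [hw, hw']; ring
        obtain ⟨u, hu, hgt⟩ := ih g hg ⟨w', hM⟩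
        exact ⟨u, hu.trans (Finset.subset_insert a s'), hgt⟩

lemma truncPow_coeff {A : Type*} [CommSemiring A] (k : ℕ) (q : Polynomial (PowerSeries A))
    (j : ℕ) : (truncPow k q).coeff j = PowerSeries.trunc k (q.coeff j) := by
  rw [truncPow, finset_sum_coeff]
  by_cases h : j ∈ q.support
  · rw [Finset.sum_eq_single j (fun b _ hb => by rw [coeff_monomial, if_neg hb])
      (fun hj => absurd h hj)]
    rw [coeff_monomial, if_pos rfl]
  · rw [Finset.sum_eq_zero (fun b hb => by
      rw [coeff_monomial, if_neg (fun hbj : b = j => h (hbj ▸ hb))])]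
    rw [notMem_support_iff.mp h, map_zero]

lemma monic_of_map_injective {A B : Type*} [CommSemiring A] [CommSemiring B]
    {f : A →+* B} (hf : Function.Injective f) {p : Polynomial A}
    (h : (p.map f).Monic) : p.Monic := by
  have hdeg := natDegree_map_eq_of_injective hf p
  have := h.coeff_natDegree
  rw [hdeg, coeff_map] at this
  rw [Monic, leadingCoeff]
  exact hf (by rw [this, map_one])

lemma truncPow_map_coe {A : Type*} [CommSemiring A] {k : ℕ} (hk : 0 < k)
    (Q : Polynomial (Polynomial A)) (h : ∀ j, (Q.coeff j).degree < (k : WithBot ℕ)) :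
    truncPow k (Q.map (coeToPowerSeries.ringHom)) = Q := by
  refine Polynomial.ext fun j => ?_
  rw [truncPow_coeff, coeff_map, coeToPowerSeries.ringHom_apply]
  apply PowerSeries.trunc_coe_eq_self
  rcases eq_or_ne (Q.coeff j) 0 with h0 | h0
  · rw [h0]; simpa using hk
  · exact (natDegree_lt_iff_degree_lt h0).mpr (h j)

lemma truncPow_monic {A : Type*} [CommSemiring A] {k : ℕ} (hk : 0 < k)
    {Q : Polynomial (PowerSeries A)} (hQ : Q.Monic) : (truncPow k Q).Monic := by
  obtain ⟨k', rfl⟩ : ∃ k', k = k' + 1 := ⟨k - 1, by omega⟩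
  apply monic_of_natDegree_le_of_coeff_eq_one Q.natDegree
  · rw [natDegree_le_iff_coeff_eq_zero]
    intro N hN
    rw [truncPow_coeff, coeff_eq_zero_of_natDegree_lt hN, map_zero]
  · rw [truncPow_coeff, hQ.coeff_natDegree, PowerSeries.trunc_one]

lemma degree_mul_lt_of_lt {K : Type*} [CommRing K] [IsDomain K] {x y : K[X]} {dq dr : ℕ}
    (hx : x.degree < (dq : WithBot ℕ)) (hy : y.degree < (dr : WithBot ℕ)) :
    (x * y).degree < ((dq + dr : ℕ) : WithBot ℕ) := by
  apply lt_of_le_of_lt (degree_mul_le x y)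
  rcases eq_or_ne x 0 with rfl | hx0
  · rw [degree_zero, WithBot.bot_add]; exact WithBot.bot_lt_coe _
  rcases eq_or_ne y 0 with rfl | hy0
  · rw [degree_zero, WithBot.add_bot]; exact WithBot.bot_lt_coe _
  rw [degree_eq_natDegree hx0] at hx ⊢
  rw [degree_eq_natDegree hy0] at hy ⊢
  have h1 : x.natDegree < dq := by exact_mod_cast hx
  have h2 : y.natDegree < dr := by exact_mod_cast hy
  exact_mod_cast Nat.add_lt_add h1 h2

lemma degree_mul_lt_of_eq_of_lt {K : Type*} [CommRing K] [IsDomain K] {x y : K[X]} {dq dr : ℕ}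
    (hx : x.degree = (dr : WithBot ℕ)) (hy : y.degree < (dq : WithBot ℕ)) :
    (x * y).degree < ((dq + dr : ℕ) : WithBot ℕ) := by
  rcases eq_or_ne y 0 with rfl | hy0
  · rw [mul_zero, degree_zero]; exact WithBot.bot_lt_coe _
  rw [degree_mul, hx]
  have : ((dq + dr : ℕ) : WithBot ℕ) = (dr : WithBot ℕ) + (dq : WithBot ℕ) := by
    push_cast; ring
  rw [this]
  exact WithBot.add_lt_add_left (WithBot.coe_ne_bot) hy

lemma descend_coeffs {Rc Kc : Type*} [CommRing Rc] [CommRing Kc] [IsDomain Kc]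
    (ν : Rc →+* Kc) (hν : Function.Injective ν)
    (Pb : Polynomial (Polynomial Rc)) (G' H' : Polynomial (Polynomial Kc))
    (q r a b : Polynomial Rc)
    (hq : q.Monic) (hr : r.Monic) {dq dr : ℕ}
    (hqd : q.degree = (dq : WithBot ℕ)) (hrd : r.degree = (dr : WithBot ℕ))
    (habz : a * q + b * r = 1)
    (hPGH : Pb.map (Polynomial.mapRingHom ν) = G' * H')
    (hg0 : G'.coeff 0 = q.map ν) (hh0 : H'.coeff 0 = r.map ν)
    (hdegG : ∀ m, 0 < m → ((G'.coeff m).degree < (dq : WithBot ℕ)))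
    (hdegH : ∀ m, 0 < m → ((H'.coeff m).degree < (dr : WithBot ℕ)))
    (hdegP : ∀ m, 0 < m → ((Pb.coeff m).degree < ((dq + dr : ℕ) : WithBot ℕ))) :
    ∀ m, (∃ x : Polynomial Rc, x.map ν = G'.coeff m) ∧
         (∃ y : Polynomial Rc, y.map ν = H'.coeff m) := by
  haveI : IsDomain Rc := hν.isDomain ν
  intro m
  induction m using Nat.strong_induction_on with
  | _ m ih =>
  rcases Nat.eq_zero_or_pos m with rfl | hm
  · exact ⟨⟨q, hg0.symm⟩, ⟨r, hh0.symm⟩⟩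
  have hkey : (Pb.coeff m).map ν =
      ∑ x ∈ Finset.HasAntidiagonal.antidiagonal m, G'.coeff x.1 * H'.coeff x.2 := by
    have h := congrArg (fun Q => Q.coeff m) hPGH
    simpa [Polynomial.coeff_mul] using h
  set S : Finset (ℕ × ℕ) := ((Finset.HasAntidiagonal.antidiagonal m).erase (0, m)).erase (m, 0) with hS
  have hSprop : ∀ x ∈ S, 0 < x.1 ∧ x.1 < m ∧ 0 < x.2 ∧ x.2 < m := by
    intro x hx
    rw [hS, Finset.mem_erase, Finset.mem_erase, Finset.HasAntidiagonal.mem_antidiagonal] at hx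
    obtain ⟨hne1, hne2, hadd⟩ := hx
    have hx1 : x.1 ≠ 0 := by
      intro h0
      exact hne2 (Prod.ext h0 (by omega))
    have hx2 : x.2 ≠ 0 := by
      intro h0
      exact hne1 (Prod.ext (by omega) h0)
    omega
  have h0m : (0, m) ∈ Finset.HasAntidiagonal.antidiagonal m := by simp
  have hm0 : (m, 0) ∈ (Finset.HasAntidiagonal.antidiagonal m).erase (0, m) := by
    rw [Finset.mem_erase]
    constructor
    · intro h; rw [Prod.ext_iff] at h; omega
    · simp
  have hsplit : ∑ x ∈ Finset.HasAntidiagonal.antidiagonal m, G'.coeff x.1 * H'.coeff x.2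
      = G'.coeff 0 * H'.coeff m +
        (G'.coeff m * H'.coeff 0 + ∑ x ∈ S, G'.coeff x.1 * H'.coeff x.2) := by
    rw [← Finset.add_sum_erase _ (fun x : ℕ × ℕ => G'.coeff x.1 * H'.coeff x.2) h0m,
        ← Finset.add_sum_erase _ (fun x : ℕ × ℕ => G'.coeff x.1 * H'.coeff x.2) hm0]
  have hWmem : ∀ x ∈ S, ∃ w : Polynomial Rc, w.map ν = G'.coeff x.1 * H'.coeff x.2 := by
    intro x hx
    obtain ⟨h1, h2, h3, h4⟩ := hSprop x hx
    obtain ⟨⟨xg, hxg⟩, -⟩ := ih x.1 h2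
    obtain ⟨-, ⟨yh, hyh⟩⟩ := ih x.2 h4
    exact ⟨xg * yh, by rw [Polynomial.map_mul, hxg, hyh]⟩
  choose w hw using hWmem
  set W₀ : Polynomial Rc := Pb.coeff m - ∑ x ∈ S.attach, w x x.2 with hW₀
  have hW : W₀.map ν = (Pb.coeff m).map ν - ∑ x ∈ S, G'.coeff x.1 * H'.coeff x.2 := by
    rw [hW₀, Polynomial.map_sub, Polynomial.map_sum]
    congr 1
    rw [← Finset.sum_attach S (fun x => G'.coeff x.1 * H'.coeff x.2)]
    exact Finset.sum_congr rfl (fun x _ => hw x x.2)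
  have heq : (q.map ν) * H'.coeff m + (r.map ν) * G'.coeff m = W₀.map ν := by
    rw [hW, hkey, hsplit, hg0, hh0]; ring
  have hWdeg : W₀.degree < ((dq + dr : ℕ) : WithBot ℕ) := by
    rw [← Polynomial.degree_map_eq_of_injective hν W₀, hW]
    apply lt_of_le_of_lt (Polynomial.degree_sub_le _ _)
    apply max_lt
    · rw [Polynomial.degree_map_eq_of_injective hν]; exact hdegP m hm
    · apply lt_of_le_of_lt (Polynomial.degree_sum_le _ _)
      rw [Finset.sup_lt_iff (WithBot.bot_lt_coe _)]
      intro x hx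
      obtain ⟨h1, -, h3, -⟩ := hSprop x hx
      exact degree_mul_lt_of_lt (hdegG x.1 h1) (hdegH x.2 h3)
  set X₀ : Polynomial Rc := (b * W₀) %ₘ q with hX₀def
  set DD : Polynomial Rc := (b * W₀) /ₘ q with hDDdef
  set Y₀ : Polynomial Rc := a * W₀ + r * DD with hY₀def
  have hmd : X₀ + q * DD = b * W₀ := Polynomial.modByMonic_add_div _ q
  have hid : q * Y₀ + r * X₀ = W₀ := by
    rw [hY₀def]
    linear_combination r * hmd + W₀ * habz
  have hX₀deg : X₀.degree < (dq : WithBot ℕ) := hqd ▸ Polynomial.degree_modByMonic_lt _ hq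
  have hY₀deg : Y₀.degree < (dr : WithBot ℕ) := by
    rcases eq_or_ne Y₀ 0 with h0 | h0
    · rw [h0, Polynomial.degree_zero]; exact WithBot.bot_lt_coe _
    have h1 : (q * Y₀).degree = (dq : WithBot ℕ) + Y₀.degree := by
      rw [Polynomial.degree_mul, hqd]
    have h2 : (q * Y₀).degree < ((dq + dr : ℕ) : WithBot ℕ) := by
      have h3 : q * Y₀ = W₀ - r * X₀ := by linear_combination hid
      rw [h3]
      apply lt_of_le_of_lt (Polynomial.degree_sub_le _ _)
      exact max_lt hWdeg (degree_mul_lt_of_eq_of_lt hrd hX₀deg)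
    rw [h1] at h2
    have h4 : ((dq + dr : ℕ) : WithBot ℕ) = (dq : WithBot ℕ) + (dr : WithBot ℕ) := by
      push_cast; ring
    rw [h4] at h2
    exact (WithBot.add_lt_add_iff_left (WithBot.coe_ne_bot)).mp h2
  have heqK : (q.map ν) * (Y₀.map ν) + (r.map ν) * (X₀.map ν) = W₀.map ν := by
    rw [← Polynomial.map_mul, ← Polynomial.map_mul, ← Polynomial.map_add, hid]
  have hsub : (q.map ν) * (Y₀.map ν - H'.coeff m) = (r.map ν) * (G'.coeff m - X₀.map ν) := by
    linear_combination heqK - heq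
  have habzK : (a.map ν) * (q.map ν) + (b.map ν) * (r.map ν) = 1 := by
    rw [← Polynomial.map_mul, ← Polynomial.map_mul, ← Polynomial.map_add, habz,
      Polynomial.map_one]
  have hdvd : (r.map ν) ∣ (Y₀.map ν - H'.coeff m) := by
    refine ⟨(a.map ν) * (G'.coeff m - X₀.map ν) + (b.map ν) * (Y₀.map ν - H'.coeff m), ?_⟩
    linear_combination (-(Y₀.map ν - H'.coeff m)) * habzK + (a.map ν) * hsub
  have hrK : (r.map ν).degree = (dr : WithBot ℕ) := by
    rw [Polynomial.degree_map_eq_of_injective hν]; exact hrd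
  have hZdeg : (Y₀.map ν - H'.coeff m).degree < (r.map ν).degree := by
    rw [hrK]
    apply lt_of_le_of_lt (Polynomial.degree_sub_le _ _)
    apply max_lt
    · rw [Polynomial.degree_map_eq_of_injective hν]; exact hY₀deg
    · exact hdegH m hm
  have hZ : Y₀.map ν - H'.coeff m = 0 :=
    Polynomial.eq_zero_of_dvd_of_degree_lt hdvd hZdeg
  have hH : H'.coeff m = Y₀.map ν := (sub_eq_zero.mp hZ).symm
  have hGX : G'.coeff m = X₀.map ν := by
    have h5 : (r.map ν) * (G'.coeff m - X₀.map ν) = 0 := by rw [← hsub, hZ, mul_zero]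
    have h6 : (r.map ν) ≠ 0 := (hr.map ν).ne_zero
    exact sub_eq_zero.mp ((mul_eq_zero.mp h5).resolve_left h6)
  exact ⟨⟨X₀, hGX.symm⟩, ⟨Y₀, hH.symm⟩⟩

lemma exists_preimage_poly {A B : Type*} [CommSemiring A] [CommSemiring B] (f : A →+* B)
    (Q : Polynomial B) (h : ∀ m, ∃ x : A, f x = Q.coeff m) : ∃ Q₀ : Polynomial A, Q₀.map f = Q := by
  choose x hx using h
  refine ⟨∑ m ∈ Q.support, monomial m (x m), ?_⟩
  refine Polynomial.ext fun m => ?_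
  rw [coeff_map, finset_sum_coeff]
  by_cases hmem : m ∈ Q.support
  · rw [Finset.sum_eq_single m (fun b _ hb => by rw [coeff_monomial, if_neg hb])
      (fun hj => absurd hmem hj), coeff_monomial, if_pos rfl, hx]
  · rw [Finset.sum_eq_zero (fun b hb => by
      rw [coeff_monomial, if_neg (fun hbj : b = m => hmem (hbj ▸ hb))]), map_zero,
      (notMem_support_iff.mp hmem)]

lemma mv_eq_C_of_map_eq_C {F K : Type*} [CommSemiring F] [CommSemiring K] {σ : Type*}
    {f : F →+* K} (hf : Function.Injective f) (c : MvPolynomial σ F) (β : K)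
    (h : MvPolynomial.map f c = MvPolynomial.C β) :
    ∃ a : F, c = MvPolynomial.C a := by
  classical
  refine ⟨MvPolynomial.coeff 0 c, ?_⟩
  apply MvPolynomial.ext
  intro d
  rw [MvPolynomial.coeff_C]
  by_cases hd : 0 = d
  · rw [if_pos hd, hd]
  · rw [if_neg hd]
    apply hf
    rw [← MvPolynomial.coeff_map, h, map_zero, MvPolynomial.coeff_C, if_neg hd]

end Aux

theorem stmt_8 {F : Type*} [Field F] {n : ℕ}
    (P : Polynomial (Polynomial (MvPolynomial (Fin n) F)))
    (hP0 : P ≠ 0) (hsqf : Squarefree P)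
    -- `P` is monic in `z`:
    (hmonic : ∃ c : F, c ≠ 0 ∧ P.leadingCoeff = Polynomial.C (MvPolynomial.C c))
    -- `P(0, x, z) = P(0, 0, z) ∈ F[z]` (this is `T`-regularity) and it is squarefree:
    (p₀ : Polynomial F)
    (hreg : P.map (Polynomial.evalRingHom (0 : MvPolynomial (Fin n) F)) =
      p₀.map (MvPolynomial.C : F →+* MvPolynomial (Fin n) F))
    (hp₀sqf : Squarefree p₀)
    -- `P = ∏ (z − φ_i)` in `F̄[x][[T]][z]`, with `D = deg_z P`:
    (D : ℕ) (hD : D = P.natDegree)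
    (φ : Fin D → PowerSeries (MvK F n))
    (hfact : liftPS F n (liftTXZ F n P) =
      ∏ i : Fin D, (Polynomial.X - Polynomial.C (φ i)))
    -- `k > deg_T P`:
    (k : ℕ) (hk : ∀ i : ℕ, (P.coeff i).degree < (k : ℕ)) :
    -- the set of monic-in-`z` factors of `P` over `F`, viewed inside `F̄[T, x, z]`,
    -- equals the set of subproducts `Q_U` dividing `P` whose `T = 0` projection
    -- is a univariate with coefficients in `F`:
    {G : Polynomial (Polynomial (MvK F n)) |
        ∃ G₀ : Polynomial (Polynomial (MvPolynomial (Fin n) F)),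
          G₀.Monic ∧ G₀ ∣ P ∧ liftTXZ F n G₀ = G} =
    {G : Polynomial (Polynomial (MvK F n)) |
        ∃ U : Finset (Fin D),
          G = truncPow (A := MvK F n) k (∏ i ∈ U, (Polynomial.X - Polynomial.C (φ i))) ∧
          G ∣ liftTXZ F n P ∧
          ∃ q : Polynomial F,
            G.map (Polynomial.evalRingHom (0 : MvK F n)) =
              q.map ((MvPolynomial.C : AlgebraicClosure F →+* MvK F n).comp
                (algebraMap F (AlgebraicClosure F)))} := by
  classical
  set ιx : MvPolynomial (Fin n) F →+* MvK F n :=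
    MvPolynomial.map (algebraMap F (AlgebraicClosure F)) with hιxdef
  have hιinj : Function.Injective ιx :=
    MvPolynomial.map_injective _ (algebraMap F (AlgebraicClosure F)).injective
  have hTXZinj : Function.Injective (liftTXZ F n) := fun x y hxy =>
    Polynomial.map_injective _ (Polynomial.map_injective _ hιinj) hxy
  have hCinj : Function.Injective (MvPolynomial.C : F →+* MvPolynomial (Fin n) F) :=
    MvPolynomial.C_injective _ _
  have hhomeq : ιx.comp (MvPolynomial.C : F →+* MvPolynomial (Fin n) F) =
      (MvPolynomial.C : AlgebraicClosure F →+* MvK F n).comp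
        (algebraMap F (AlgebraicClosure F)) :=
    RingHom.ext fun f => by simp [hιxdef, MvPolynomial.map_C]
  have hliftPmonic : (liftTXZ F n P).Monic := by
    apply monic_of_map_injective (f := Polynomial.coeToPowerSeries.ringHom)
      (Polynomial.coe_injective _)
    have h1 : ((liftTXZ F n P).map Polynomial.coeToPowerSeries.ringHom) =
        liftPS F n (liftTXZ F n P) := rfl
    rw [h1, hfact]
    exact monic_prod_of_monic _ _ fun i _ => monic_X_sub_C _
  have hPm : P.Monic :=
    monic_of_map_injective (Polynomial.map_injective _ hιinj) hliftPmonic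
  have hk1 : 0 < k := by
    by_contra hlt
    push_neg at hlt
    interval_cases k
    have h := hk P.natDegree
    rw [hPm.coeff_natDegree] at h
    simp at h
  have hp₀m : p₀.Monic := by
    apply monic_of_map_injective (f := (MvPolynomial.C : F →+* MvPolynomial (Fin n) F)) hCinj
    rw [← hreg]
    exact hPm.map _
  ext G
  simp only [Set.mem_setOf_eq]
  constructor
  · rintro ⟨G₀, hG₀m, hG₀dvd, rfl⟩
    obtain ⟨H₀, hPH⟩ := hG₀dvd
    have hGm : (liftTXZ F n G₀).Monic := hG₀m.map (mapRingHom ιx)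
    have hdvdK : liftTXZ F n G₀ ∣ liftTXZ F n P := _root_.map_dvd _ ⟨H₀, hPH⟩
    have hdvdPS : liftPS F n (liftTXZ F n G₀) ∣ ∏ i : Fin D, (X - C (φ i)) := by
      rw [← hfact]; exact _root_.map_dvd _ hdvdK
    obtain ⟨U, hUsub, hUeq⟩ := monic_dvd_finset_prod_X_sub_C Finset.univ φ _
      (hGm.map coeToPowerSeries.ringHom) hdvdPS
    have hcoefflt : ∀ j, ((liftTXZ F n G₀).coeff j).degree < (k : WithBot ℕ) := by
      apply coeff_degree_lt_of_dvd hdvdK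
      · intro hz; exact hP0 (by apply hTXZinj; rw [hz, map_zero])
      · intro i
        have h2 : (liftTXZ F n P).coeff i = (P.coeff i).map ιx := coeff_map _ i
        rw [h2, Polynomial.degree_map_eq_of_injective hιinj]
        exact hk i
    refine ⟨U, ?_, _root_.map_dvd _ ⟨H₀, hPH⟩, ?_⟩
    · rw [← hUeq]
      exact (truncPow_map_coe hk1 _ hcoefflt).symm
    · -- existence of `q`
      set g₁ : Polynomial (MvPolynomial (Fin n) F) := G₀.map (evalRingHom 0) with hg₁
      have hg₁m : g₁.Monic := hG₀m.map _
      have hg₁dvd : g₁ ∣ p₀.map (MvPolynomial.C : F →+* MvPolynomial (Fin n) F) := by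
        rw [← hreg, hPH, Polynomial.map_mul]
        exact Dvd.intro _ rfl
      have hpbarm : (p₀.map (algebraMap F (AlgebraicClosure F))).Monic := hp₀m.map _
      have hpbar_eq : p₀.map (algebraMap F (AlgebraicClosure F)) =
          ((p₀.map (algebraMap F (AlgebraicClosure F))).roots.map fun a => X - C a).prod :=
        (IsAlgClosed.splits _).eq_prod_roots_of_monic hpbarm
      have hmapchain : (p₀.map (MvPolynomial.C : F →+* MvPolynomial (Fin n) F)).map ιx =
          (((p₀.map (algebraMap F (AlgebraicClosure F))).roots.map
            (MvPolynomial.C : AlgebraicClosure F →+* MvK F n)).map fun a => X - C a).prod := by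
        rw [Polynomial.map_map, hhomeq, ← Polynomial.map_map]
        conv_lhs => rw [hpbar_eq]
        rw [Polynomial.map_multiset_prod, Multiset.map_map, Multiset.map_map]
        congr 1
        apply Multiset.map_congr rfl
        intro a _
        simp
      have hdvd2 : g₁.map ιx ∣
          (((p₀.map (algebraMap F (AlgebraicClosure F))).roots.map
            (MvPolynomial.C : AlgebraicClosure F →+* MvK F n)).map fun a => X - C a).prod := by
        rw [← hmapchain]
        exact Polynomial.map_dvd _ hg₁dvd
      obtain ⟨t, ht, hteq⟩ := monic_dvd_multiset_prod_X_sub_C _ _ (hg₁m.map _) hdvd2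
      have hlifts : g₁.map ιx ∈
          Polynomial.lifts (MvPolynomial.C : AlgebraicClosure F →+* MvK F n) := by
        rw [hteq]
        apply multiset_prod_mem
        intro x hx
        obtain ⟨aa, haa, rfl⟩ := Multiset.mem_map.mp hx
        have haa2 := Multiset.mem_of_le ht haa
        obtain ⟨β, hβ, rfl⟩ := Multiset.mem_map.mp haa2
        rw [Polynomial.mem_lifts]
        exact ⟨X - C β, by simp⟩
      obtain ⟨gbar, hgbar⟩ := (Polynomial.mem_lifts _).mp hlifts
      refine ⟨g₁.map (MvPolynomial.constantCoeff), ?_⟩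
      have hev : (liftTXZ F n G₀).map (evalRingHom (0 : MvK F n)) = g₁.map ιx :=
        map_eval0_map _ G₀
      rw [hev]
      refine Polynomial.ext fun m => ?_
      simp only [coeff_map]
      have hco : MvPolynomial.map (algebraMap F (AlgebraicClosure F)) (g₁.coeff m) =
          MvPolynomial.C (gbar.coeff m) := by
        have h3 := congrArg (fun p => p.coeff m) hgbar
        simp only [coeff_map] at h3
        rw [hιxdef] at *
        exact h3.symm
      obtain ⟨aco, haco⟩ :=
        mv_eq_C_of_map_eq_C (algebraMap F (AlgebraicClosure F)).injective _ _ hco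
      rw [haco]
      simp [hιxdef, MvPolynomial.map_C]
  · rintro ⟨U, hGdef, hGdvd, q, hq⟩
    have hΦm : (∏ i ∈ U, (X - C (φ i))).Monic :=
      monic_prod_of_monic _ _ fun i _ => monic_X_sub_C _
    have hGm : G.Monic := by rw [hGdef]; exact truncPow_monic hk1 hΦm
    obtain ⟨H, hPGH⟩ := hGdvd
    have hHm : H.Monic := hGm.of_mul_monic_left (hPGH ▸ hliftPmonic)
    have hev0P : (liftTXZ F n P).map (evalRingHom (0 : MvK F n)) =
        (p₀.map (MvPolynomial.C : F →+* MvPolynomial (Fin n) F)).map ιx := by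
      have h1 : (liftTXZ F n P).map (evalRingHom (0 : MvK F n)) =
          (P.map (evalRingHom (0 : MvPolynomial (Fin n) F))).map ιx := map_eval0_map _ P
      rw [h1, hreg]
    have hmul0 : (p₀.map (MvPolynomial.C : F →+* MvPolynomial (Fin n) F)).map ιx =
        (G.map (evalRingHom (0 : MvK F n))) * (H.map (evalRingHom (0 : MvK F n))) := by
      rw [← hev0P, hPGH, Polynomial.map_mul]
    have hcompinj : Function.Injective
        ((MvPolynomial.C : AlgebraicClosure F →+* MvK F n).comp
          (algebraMap F (AlgebraicClosure F))) :=
      (MvPolynomial.C_injective _ _).comp (algebraMap F (AlgebraicClosure F)).injective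
    have hG0m : (G.map (evalRingHom (0 : MvK F n))).Monic := hGm.map _
    have hqm : q.Monic := monic_of_map_injective hcompinj (hq ▸ hG0m)
    have hqmap : q.map ((MvPolynomial.C : AlgebraicClosure F →+* MvK F n).comp
        (algebraMap F (AlgebraicClosure F))) =
        (q.map (MvPolynomial.C : F →+* MvPolynomial (Fin n) F)).map ιx := by
      rw [Polynomial.map_map, hhomeq]
    have hqdvd : q ∣ p₀ := by
      rw [← modByMonic_eq_zero_iff_dvd hqm]
      apply Polynomial.map_injective _ hcompinj
      rw [Polynomial.map_modByMonic _ hqm, Polynomial.map_zero]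
      rw [modByMonic_eq_zero_iff_dvd (hqm.map _)]
      rw [← hq]
      have h4 : p₀.map ((MvPolynomial.C : AlgebraicClosure F →+* MvK F n).comp
          (algebraMap F (AlgebraicClosure F))) =
          (p₀.map (MvPolynomial.C : F →+* MvPolynomial (Fin n) F)).map ιx := by
        rw [Polynomial.map_map, hhomeq]
      rw [h4, hmul0]
      exact Dvd.intro _ rfl
    set r : Polynomial F := p₀ /ₘ q with hrdef
    have hp₀qr : p₀ = q * r := by
      have h5 := modByMonic_add_div p₀ q
      rw [(modByMonic_eq_zero_iff_dvd hqm).mpr hqdvd, zero_add] at h5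
      exact h5.symm
    have hrm : r.Monic := hqm.of_mul_monic_left (hp₀qr ▸ hp₀m)
    have hcop : IsCoprime q r := by
      apply (EuclideanDomain.gcd_isUnit_iff).mp
      apply hp₀sqf
      have h6 : (EuclideanDomain.gcd q r) * (EuclideanDomain.gcd q r) ∣ q * r :=
        mul_dvd_mul (EuclideanDomain.gcd_dvd_left _ _) (EuclideanDomain.gcd_dvd_right _ _)
      rwa [← hp₀qr] at h6
    obtain ⟨a, b, hab⟩ := hcop
    have hH0 : H.map (evalRingHom (0 : MvK F n)) =
        (r.map (MvPolynomial.C : F →+* MvPolynomial (Fin n) F)).map ιx := by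
      have h1 : (G.map (evalRingHom (0 : MvK F n))) *
          ((r.map (MvPolynomial.C : F →+* MvPolynomial (Fin n) F)).map ιx)
          = (G.map (evalRingHom (0 : MvK F n))) * (H.map (evalRingHom (0 : MvK F n))) := by
        conv_lhs => rw [hq, hqmap]
        rw [← Polynomial.map_mul, ← Polynomial.map_mul, ← hp₀qr, hmul0]
      exact (mul_left_cancel₀ hG0m.ne_zero h1).symm
    have hqRd : (q.map (MvPolynomial.C : F →+* MvPolynomial (Fin n) F)).degree =
        (G.natDegree : WithBot ℕ) := by
      rw [Polynomial.degree_map_eq_of_injective hCinj]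
      have h2 : q.natDegree = G.natDegree := by
        calc q.natDegree
            = (q.map ((MvPolynomial.C : AlgebraicClosure F →+* MvK F n).comp
                (algebraMap F (AlgebraicClosure F)))).natDegree := (hqm.natDegree_map _).symm
          _ = (G.map (evalRingHom (0 : MvK F n))).natDegree := by rw [hq]
          _ = G.natDegree := hGm.natDegree_map _
      rw [degree_eq_natDegree hqm.ne_zero, h2]
    have hrRd : (r.map (MvPolynomial.C : F →+* MvPolynomial (Fin n) F)).degree =
        (H.natDegree : WithBot ℕ) := by
      rw [Polynomial.degree_map_eq_of_injective hCinj]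
      have h2 : r.natDegree = H.natDegree := by
        calc r.natDegree
            = ((r.map (MvPolynomial.C : F →+* MvPolynomial (Fin n) F)).map ιx).natDegree := by
              rw [natDegree_map_eq_of_injective hιinj,
                natDegree_map_eq_of_injective hCinj]
          _ = (H.map (evalRingHom (0 : MvK F n))).natDegree := by rw [hH0]
          _ = H.natDegree := hHm.natDegree_map _
      rw [degree_eq_natDegree hrm.ne_zero, h2]
    have habzR : (a.map (MvPolynomial.C : F →+* MvPolynomial (Fin n) F)) *
        (q.map (MvPolynomial.C : F →+* MvPolynomial (Fin n) F)) +
        (b.map (MvPolynomial.C : F →+* MvPolynomial (Fin n) F)) *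
        (r.map (MvPolynomial.C : F →+* MvPolynomial (Fin n) F)) = 1 := by
      rw [← Polynomial.map_mul, ← Polynomial.map_mul, ← Polynomial.map_add, hab,
        Polynomial.map_one]
    have hPGHpsi : (psi _ P).map (mapRingHom ιx) = (psi _ G) * (psi _ H) := by
      rw [← psi_map_comm]
      have h7 : P.map (mapRingHom ιx) = liftTXZ F n P := rfl
      rw [h7, hPGH, map_mul]
    have hg0 : (psi _ G).coeff 0 =
        (q.map (MvPolynomial.C : F →+* MvPolynomial (Fin n) F)).map ιx := by
      rw [psi_coeff_zero, hq, hqmap]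
    have hh0 : (psi _ H).coeff 0 =
        (r.map (MvPolynomial.C : F →+* MvPolynomial (Fin n) F)).map ιx := by
      rw [psi_coeff_zero, hH0]
    have hdegPpsi : ∀ m, 0 < m → ((psi _ P).coeff m).degree <
        ((G.natDegree + H.natDegree : ℕ) : WithBot ℕ) := by
      intro m hm
      have h3 : P.natDegree = G.natDegree + H.natDegree := by
        have h4 : (liftTXZ F n P).natDegree = P.natDegree :=
          natDegree_map_eq_of_injective (Polynomial.map_injective _ hιinj) P
        rw [← h4, hPGH, hGm.natDegree_mul hHm]
      rw [← h3]
      exact psi_coeff_degree_lt_of_monic hPm m hm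
    have hdesc := descend_coeffs ιx hιinj (psi _ P) (psi _ G) (psi _ H)
      (q.map (MvPolynomial.C : F →+* MvPolynomial (Fin n) F))
      (r.map (MvPolynomial.C : F →+* MvPolynomial (Fin n) F))
      (a.map (MvPolynomial.C : F →+* MvPolynomial (Fin n) F))
      (b.map (MvPolynomial.C : F →+* MvPolynomial (Fin n) F))
      (hqm.map _) (hrm.map _) hqRd hrRd habzR hPGHpsi hg0 hh0
      (psi_coeff_degree_lt_of_monic hGm) (psi_coeff_degree_lt_of_monic hHm) hdegPpsi
    obtain ⟨GF, hGF⟩ := exists_preimage_poly (mapRingHom ιx) (psi _ G) (fun m => (hdesc m).1)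
    obtain ⟨HF, hHF⟩ := exists_preimage_poly (mapRingHom ιx) (psi _ H) (fun m => (hdesc m).2)
    have hliftG : liftTXZ F n (psi _ GF) = G := by
      apply psi_injective (MvK F n)
      calc psi _ (liftTXZ F n (psi _ GF))
          = (psi _ (psi _ GF)).map (mapRingHom ιx) := psi_map_comm _ _
        _ = GF.map (mapRingHom ιx) := by rw [psi_psi]
        _ = psi _ G := hGF
    have hliftH : liftTXZ F n (psi _ HF) = H := by
      apply psi_injective (MvK F n)
      calc psi _ (liftTXZ F n (psi _ HF))
          = (psi _ (psi _ HF)).map (mapRingHom ιx) := psi_map_comm _ _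
        _ = HF.map (mapRingHom ιx) := by rw [psi_psi]
        _ = psi _ H := hHF
    have hfactF : P = psi _ GF * psi _ HF := by
      apply hTXZinj
      rw [map_mul, hliftG, hliftH, hPGH]
    have hG₀monic : (psi _ GF).Monic := by
      apply monic_of_map_injective (f := mapRingHom ιx) (Polynomial.map_injective _ hιinj)
      have h8 : (psi _ GF).map (mapRingHom ιx) = liftTXZ F n (psi _ GF) := rfl
      rw [h8, hliftG]
      exact hGm
    exact ⟨psi _ GF, hG₀monic, ⟨psi _ HF, hfactF⟩, hliftG⟩
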